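/- Let G be a real m×n matrix satisfying the restricted isometry property of order S with constant δ_S ∈ (0,1). Let G' be the (m-1)×n matrix obtained by deleting the j-th row of G, and set δ' = δ_S + S·max_i G_{j,i}². Then for every S-sparse z ∈ ℝ^n, (1-δ')‖z‖₂² ≤ ‖G' z‖₂² ≤ (1+δ')‖z‖₂². -/
import Mathlib


open Finset in
theorem stmt_5 {m n : ℕ} (G : Matrix (Fin (m + 1)) (Fin n) ℝ) (S : ℕ) (δ : ℝ)
    (hδ : δ ∈ Set.Ioo (0 : ℝ) 1)
    (hRIP : ∀ z : Fin n → ℝ,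
      (Finset.univ.filter fun i => z i ≠ 0).card ≤ S →
      (1 - δ) * ∑ i, z i ^ 2 ≤ ∑ i, (G.mulVec z i) ^ 2 ∧
      ∑ i, (G.mulVec z i) ^ 2 ≤ (1 + δ) * ∑ i, z i ^ 2)
    (j : Fin (m + 1)) (δ' : ℝ) (hδ' : δ' = δ + S * ⨆ i : Fin n, (G j i) ^ 2) :
    ∀ z : Fin n → ℝ,
      (Finset.univ.filter fun i => z i ≠ 0).card ≤ S →
      (1 - δ') * ∑ i, z i ^ 2 ≤
          ∑ i, ((Matrix.of fun l i' => G (j.succAbove l) i').mulVec z i) ^ 2 ∧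
      ∑ i, ((Matrix.of fun l i' => G (j.succAbove l) i').mulVec z i) ^ 2 ≤
          (1 + δ') * ∑ i, z i ^ 2 := by
  obtain ⟨hδ0, hδ1⟩ := hδ
  intro z hz
  obtain ⟨lo, hi⟩ := hRIP z hz
  set M := ⨆ i : Fin n, (G j i) ^ 2 with hM
  have hMle : ∀ i : Fin n, (G j i) ^ 2 ≤ M := fun i =>
    le_ciSup (f := fun i : Fin n => (G j i) ^ 2) (Set.Finite.bddAbove (Set.finite_range _)) i
  have hMnonneg : 0 ≤ M := by
    rcases Nat.eq_zero_or_pos n with h0 | hpos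
    · subst h0
      simp [hM, Real.iSup_of_isEmpty]
    · exact le_trans (sq_nonneg _) (hMle ⟨0, hpos⟩)
  have hzsq : 0 ≤ ∑ i, z i ^ 2 := Finset.sum_nonneg fun i _ => sq_nonneg _
  have hsplit : ∑ i, (G.mulVec z i) ^ 2 =
      (G.mulVec z j) ^ 2 +
        ∑ l, ((Matrix.of fun l i' => G (j.succAbove l) i').mulVec z l) ^ 2 := by
    rw [Fin.sum_univ_succAbove (fun i => (G.mulVec z i) ^ 2) j]
    congr 1
  have hkey : (G.mulVec z j) ^ 2 ≤ S * M * ∑ i, z i ^ 2 := by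
    set s := Finset.univ.filter fun i => z i ≠ 0 with hs
    have h1 : G.mulVec z j = ∑ i ∈ s, G j i * z i := by
      rw [Matrix.mulVec, dotProduct]
      refine (Finset.sum_filter_of_ne fun i _ h => ?_).symm
      intro hzi; exact h (by simp [hzi])
    have hcs : (∑ i ∈ s, G j i * z i) ^ 2 ≤
        (∑ i ∈ s, (G j i) ^ 2) * ∑ i ∈ s, (z i) ^ 2 :=
      Finset.sum_mul_sq_le_sq_mul_sq s _ _
    have h2 : (∑ i ∈ s, (G j i) ^ 2) ≤ S * M := by
      calc (∑ i ∈ s, (G j i) ^ 2) ≤ ∑ _i ∈ s, M :=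
            Finset.sum_le_sum fun i _ => hMle i
        _ = s.card * M := by rw [Finset.sum_const, nsmul_eq_mul]
        _ ≤ S * M := by
            apply mul_le_mul_of_nonneg_right _ hMnonneg
            exact_mod_cast hz
    have h3 : ∑ i ∈ s, (z i) ^ 2 ≤ ∑ i, z i ^ 2 :=
      Finset.sum_le_sum_of_subset_of_nonneg (Finset.filter_subset _ _)
        fun i _ _ => sq_nonneg _
    rw [h1]
    calc (∑ i ∈ s, G j i * z i) ^ 2 ≤ (∑ i ∈ s, (G j i) ^ 2) * ∑ i ∈ s, (z i) ^ 2 := hcs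
      _ ≤ (S * M) * ∑ i, z i ^ 2 := by
          apply mul_le_mul h2 h3 (Finset.sum_nonneg fun i _ => sq_nonneg _)
          positivity
  constructor
  · nlinarith [sq_nonneg (G.mulVec z j)]
  · nlinarith [sq_nonneg (G.mulVec z j), mul_nonneg (mul_nonneg (Nat.cast_nonneg S : (0:ℝ) ≤ S) hMnonneg) hzsq]
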